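/- The distance Laplacian spectrum of the graph K_2 ∨ (K_{(n-2)/2} ∪ K_{(n-2)/2}) (the join of an edge with two disjoint cliques of size (n-2)/2), for even n ≥ 6, is: 2n - 2 with multiplicity 1, (3n-2)/2 with multiplicity n - 4, n with multiplicity 2, and 0 with multiplicity 1. -/

import Mathlib

open Matrix
open Finset

/-- The transmission of a vertex: sum of distances to all other vertices. -/
noncomputable def transmission {V : Type*} [Fintype V] (G : SimpleGraph V) (v : V) : ℕ :=
  ∑ u, G.dist v u

/-- The distance Laplacian matrix `D^L(G) = Diag(Tr) - D(G)`. -/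
noncomputable def distLapMatrix {V : Type*} [Fintype V] [DecidableEq V]
    (G : SimpleGraph V) : Matrix V V ℝ :=
  fun u v => if u = v then (transmission G u : ℝ) else -(G.dist u v : ℝ)

/-- `μ` is an eigenvalue of the real matrix `M`. -/
def IsEigenvalue {V : Type*} [Fintype V] [DecidableEq V] (M : Matrix V V ℝ) (μ : ℝ) : Prop :=
  Module.End.HasEigenvalue (Matrix.toLin' M) μ

/-- The multiplicity of `μ` as an eigenvalue of `M` (dimension of the eigenspace). -/
noncomputable def eigMult {V : Type*} [Fintype V] [DecidableEq V]
    (M : Matrix V V ℝ) (μ : ℝ) : ℕ :=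
  Module.finrank ℝ (Module.End.eigenspace (Matrix.toLin' M) μ)

/-- The join `K_2 ∨ (K_m ∪ K_m)` on `Fin n` with `m = (n-2)/2`: vertices `0,1` are joined to
everything; the remaining vertices split into two cliques of size `m`. -/
def joinTwoCliques (n : ℕ) : SimpleGraph (Fin n) :=
  SimpleGraph.fromRel (fun u v =>
    u.val < 2 ∨ v.val < 2 ∨ (u.val < 2 + (n - 2) / 2 ↔ v.val < 2 + (n - 2) / 2))


lemma jt_adj {n : ℕ} (u v : Fin n) :
    (joinTwoCliques n).Adj u v ↔
      u ≠ v ∧ (u.val < 2 ∨ v.val < 2 ∨ (u.val < 2 + (n-2)/2 ↔ v.val < 2 + (n-2)/2)) := by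
  simp only [joinTwoCliques, SimpleGraph.fromRel_adj]
  tauto

lemma jt_dist {n m : ℕ} (hnm : n = 2*m+2) (u v : Fin n) :
    (joinTwoCliques n).dist u v =
      if u = v then 0 else
      if u.val < 2 ∨ v.val < 2 ∨ (u.val < 2+m ↔ v.val < 2+m) then 1 else 2 := by
  have hm2 : (n-2)/2 = m := by omega
  by_cases huv : u = v
  · simp [huv]
  · rw [if_neg huv]
    by_cases hc : u.val < 2 ∨ v.val < 2 ∨ (u.val < 2+m ↔ v.val < 2+m)
    · rw [if_pos hc]
      exact SimpleGraph.dist_eq_one_iff_adj.mpr ((jt_adj u v).mpr ⟨huv, by rw [hm2]; exact hc⟩)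
    · rw [if_neg hc]
      push_neg at hc
      obtain ⟨hu2, hv2, hiff⟩ := hc
      set z : Fin n := ⟨0, by omega⟩ with hz
      have h1 : (joinTwoCliques n).Adj u z := by
        refine (jt_adj u z).mpr ⟨?_, Or.inr (Or.inl (by simp [hz]))⟩
        intro h; rw [h] at hu2; simp [hz] at hu2
      have h2 : (joinTwoCliques n).Adj z v := by
        refine (jt_adj z v).mpr ⟨?_, Or.inl (by simp [hz])⟩
        intro h; rw [← h] at hv2; simp [hz] at hv2
      have hle : (joinTwoCliques n).dist u v ≤ 2 := by
        have := SimpleGraph.dist_le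
          (SimpleGraph.Walk.cons h1 (SimpleGraph.Walk.cons h2 SimpleGraph.Walk.nil))
        simpa using this
      have hpos : 0 < (joinTwoCliques n).dist u v :=
        SimpleGraph.Reachable.pos_dist_of_ne
          ⟨SimpleGraph.Walk.cons h1 (SimpleGraph.Walk.cons h2 SimpleGraph.Walk.nil)⟩ huv
      have hne1 : (joinTwoCliques n).dist u v ≠ 1 := by
        intro h
        obtain ⟨-, h3⟩ := (jt_adj u v).mp (SimpleGraph.dist_eq_one_iff_adj.mp h)
        rw [hm2] at h3
        rcases h3 with h3 | h3 | h3
        · omega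
        · omega
        · rcases hiff with ⟨a,b⟩ | ⟨a,b⟩ <;> omega
      omega

lemma filter_cross (n m a : ℕ) (hnm : n = 2*m+2) (hm : 2 ≤ m) (ha : a < n) :
    ((range n).filter (fun i => ¬(a < 2 ∨ i < 2 ∨ (a < 2+m ↔ i < 2+m)))).card
      = if a < 2 then 0 else m := by
  by_cases h2 : a < 2
  · rw [if_pos h2]
    rw [Finset.filter_false_of_mem, Finset.card_empty]
    intro i _
    simp only [not_not]
    exact Or.inl h2
  · rw [if_neg h2]
    by_cases hA : a < 2+m
    · have : ((range n).filter (fun i => ¬(a < 2 ∨ i < 2 ∨ (a < 2+m ↔ i < 2+m)))) = Finset.Ico (2+m) n := by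
        ext i
        simp only [Finset.mem_filter, Finset.mem_range, Finset.mem_Ico]
        constructor
        · rintro ⟨h1, h3⟩
          refine ⟨?_, h1⟩
          by_contra hx
          exact h3 (Or.inr (Or.inr (by omega)))
        · rintro ⟨h1, h3⟩
          refine ⟨h3, ?_⟩
          rintro (h | h | h) <;> omega
      rw [this, Nat.card_Ico]; omega
    · have : ((range n).filter (fun i => ¬(a < 2 ∨ i < 2 ∨ (a < 2+m ↔ i < 2+m)))) = Finset.Ico 2 (2+m) := by
        ext i
        simp only [Finset.mem_filter, Finset.mem_range, Finset.mem_Ico]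
        constructor
        · rintro ⟨h1, h3⟩
          constructor
          · by_contra hx; exact h3 (Or.inr (Or.inl (by omega)))
          · by_contra hx; exact h3 (Or.inr (Or.inr (by omega)))
        · rintro ⟨h1, h3⟩
          refine ⟨by omega, ?_⟩
          rintro (h | h | h) <;> omega
      rw [this, Nat.card_Ico]; omega

lemma transmission_eq {n m : ℕ} (hnm : n = 2*m+2) (hm : 2 ≤ m) (u : Fin n) :
    transmission (joinTwoCliques n) u = if u.val < 2 then n - 1 else n - 1 + m := by
  unfold transmission
  have hrw : ∀ v : Fin n, (joinTwoCliques n).dist u v =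
      (fun i => if u.val = i then 0 else
        if u.val < 2 ∨ i < 2 ∨ (u.val < 2+m ↔ i < 2+m) then 1 else 2) v.val := by
    intro v
    rw [jt_dist hnm]
    congr 1
    simp [Fin.ext_iff]
  rw [Finset.sum_congr rfl (fun v _ => hrw v),
    Fin.sum_univ_eq_sum_range (fun i => if u.val = i then 0 else
      if u.val < 2 ∨ i < 2 ∨ (u.val < 2+m ↔ i < 2+m) then 1 else 2) n]
  set a := u.val with hav
  have ha : a < n := u.isLt
  set f : ℕ → ℕ := fun i => if a = i then 0 else
        if a < 2 ∨ i < 2 ∨ (a < 2+m ↔ i < 2+m) then 1 else 2 with hf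
  have key : ∀ i ∈ range n, f i + (if a = i then 1 else 0)
      = 1 + (if ¬(a < 2 ∨ i < 2 ∨ (a < 2+m ↔ i < 2+m)) then 1 else 0) := by
    intro i _
    simp only [hf]
    split_ifs with h1 h2 h3 <;> omega
  have hsum := Finset.sum_congr rfl key
  rw [Finset.sum_add_distrib, Finset.sum_add_distrib] at hsum
  rw [Finset.sum_ite_eq (range n) a (fun _ => 1), if_pos (Finset.mem_range.mpr ha)] at hsum
  rw [Finset.sum_const, ← Finset.card_filter] at hsum
  rw [filter_cross n m a hnm hm ha] at hsum
  simp only [smul_eq_mul, mul_one, Finset.card_range] at hsum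
  have heta : ∑ x ∈ Finset.range n, f x = (Finset.range n).sum f := rfl
  rw [heta] at hsum
  split_ifs at hsum ⊢ <;> omega

lemma filterA (n m : ℕ) (h : 2+m ≤ n) :
    (range n).filter (fun i => 2 ≤ i ∧ i < 2+m) = Finset.Ico 2 (2+m) := by
  ext i; simp only [Finset.mem_filter, Finset.mem_range, Finset.mem_Ico]; omega

lemma filterB (n m : ℕ) (h : 2+m ≤ n) :
    (range n).filter (fun i => 2+m ≤ i) = Finset.Ico (2+m) n := by
  ext i; simp only [Finset.mem_filter, Finset.mem_range, Finset.mem_Ico]; omega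

lemma sum_Ico_const_of (a b : ℕ) (g : ℕ → ℝ) (c : ℝ) (h : ∀ i, a ≤ i → i < b → g i = c) :
    ∑ i ∈ Finset.Ico a b, g i = (b - a : ℕ) * c := by
  rw [Finset.sum_congr rfl (fun i hi => h i (Finset.mem_Ico.mp hi).1 (Finset.mem_Ico.mp hi).2),
    Finset.sum_const, Nat.card_Ico, nsmul_eq_mul]

lemma sum_tri (n m : ℕ) (hnm : n = 2*m+2) (a b c : ℝ) :
    ∑ i ∈ range n, (if i < 2 then a else if i < 2+m then b else c) = 2*a + m*b + m*c := by
  set g : ℕ → ℝ := fun i => if i < 2 then a else if i < 2+m then b else c with hg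
  rw [Finset.range_eq_Ico,
    ← Finset.sum_Ico_consecutive g (by omega : 0 ≤ 2+m) (by omega : 2+m ≤ n),
    ← Finset.sum_Ico_consecutive g (by omega : 0 ≤ 2) (by omega : 2 ≤ 2+m)]
  rw [sum_Ico_const_of 0 2 g a (fun i h1 h2 => by simp only [hg]; rw [if_pos h2]),
    sum_Ico_const_of 2 (2+m) g b (fun i h1 h2 => by simp only [hg]; rw [if_neg (by omega), if_pos h2]),
    sum_Ico_const_of (2+m) n g c (fun i h1 h2 => by simp only [hg]; rw [if_neg (by omega), if_neg (by omega)])]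
  have e1 : 2+m-2 = m := by omega
  have e2 : n - (2+m) = m := by omega
  rw [e1, e2]
  ring

lemma sum_pair (s : Finset ℕ) (a b : ℕ) (hab : a ≠ b)
    (h : (a ∈ s ∧ b ∈ s) ∨ (a ∉ s ∧ b ∉ s)) :
    ∑ i ∈ s, (if i = a then (1:ℝ) else if i = b then -1 else 0) = 0 := by
  have key : ∀ i ∈ s, (if i = a then (1:ℝ) else if i = b then -1 else 0)
      = (if i = a then (1:ℝ) else 0) + (if i = b then (-1:ℝ) else 0) := by
    intro i _
    rcases eq_or_ne i a with rfl | h1 <;> rcases eq_or_ne i b with rfl | h2 <;> simp_all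
  rw [Finset.sum_congr rfl key, Finset.sum_add_distrib,
    Finset.sum_ite_eq' s a (fun _ => (1:ℝ)), Finset.sum_ite_eq' s b (fun _ => (-1:ℝ))]
  rcases h with ⟨h1, h2⟩ | ⟨h1, h2⟩
  · rw [if_pos h1, if_pos h2]; ring
  · rw [if_neg h1, if_neg h2]; ring

/-- sum over a Fin-filter equals sum over a range-filter -/
lemma sum_filter_val (n : ℕ) (P : ℕ → Prop) [DecidablePred P] (g : ℕ → ℝ) :
    ∑ u ∈ Finset.univ.filter (fun u : Fin n => P u.val), g u.val
      = ∑ i ∈ (range n).filter P, g i := by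
  rw [Finset.sum_filter, Finset.sum_filter,
    Fin.sum_univ_eq_sum_range (fun i => if P i then g i else 0) n]

lemma mulVec_formula {n m : ℕ} (hnm : n = 2*m+2) (hm : 2 ≤ m) (x : Fin n → ℝ) (v : Fin n) :
    (distLapMatrix (joinTwoCliques n)).mulVec x v =
      ((if v.val < 2 then (n:ℝ) - 1 else (n:ℝ) - 1 + m) + 1) * x v - (∑ u, x u) -
        (if v.val < 2 then 0 else
         if v.val < 2+m then ∑ u ∈ Finset.univ.filter (fun u : Fin n => 2+m ≤ u.val), x u
         else ∑ u ∈ Finset.univ.filter (fun u : Fin n => 2 ≤ u.val ∧ u.val < 2+m), x u) := by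
  classical
  set trv : ℝ := if v.val < 2 then (n:ℝ) - 1 else (n:ℝ) - 1 + m with htrv
  have hmv : (distLapMatrix (joinTwoCliques n)).mulVec x v
      = ∑ u, (if v = u then ((transmission (joinTwoCliques n) v : ℝ)) else -((joinTwoCliques n).dist v u : ℝ)) * x u := by
    simp [Matrix.mulVec, dotProduct, distLapMatrix]
  have htr : ((transmission (joinTwoCliques n) v : ℝ)) = trv := by
    rw [transmission_eq hnm hm, htrv]
    split_ifs
    · rw [Nat.cast_sub (by omega)]; norm_num
    · rw [Nat.cast_add, Nat.cast_sub (by omega)]; norm_num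
  have key : ∀ u : Fin n,
      (if v = u then ((transmission (joinTwoCliques n) v : ℝ)) else -((joinTwoCliques n).dist v u : ℝ)) * x u
      = (trv + 1) * (if v = u then x u else 0) - x u
        - (if ¬(v.val < 2 ∨ u.val < 2 ∨ (v.val < 2+m ↔ u.val < 2+m)) then x u else 0) := by
    intro u
    by_cases hvu : v = u
    · rw [if_pos hvu, if_pos hvu, htr]
      have : ¬¬(v.val < 2 ∨ u.val < 2 ∨ (v.val < 2+m ↔ u.val < 2+m)) := by
        subst hvu; simp
      rw [if_neg this]
      ring
    · rw [if_neg hvu, if_neg hvu, jt_dist hnm, if_neg hvu]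
      by_cases hc : v.val < 2 ∨ u.val < 2 ∨ (v.val < 2+m ↔ u.val < 2+m)
      · rw [if_pos hc, if_neg (not_not.mpr hc)]
        push_cast; ring
      · rw [if_neg hc, if_pos hc]
        push_cast; ring
  rw [hmv, Finset.sum_congr rfl (fun u _ => key u)]
  rw [Finset.sum_sub_distrib, Finset.sum_sub_distrib, ← Finset.mul_sum]
  rw [Finset.sum_ite_eq Finset.univ v x, if_pos (Finset.mem_univ v)]
  congr 1
  rw [← Finset.sum_filter]
  by_cases h2 : v.val < 2
  · rw [if_pos h2]
    rw [Finset.filter_false_of_mem, Finset.sum_empty]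
    intro u _
    simp only [not_not]
    exact Or.inl h2
  · rw [if_neg h2]
    by_cases hA : v.val < 2+m
    · rw [if_pos hA]
      apply Finset.sum_congr _ (fun _ _ => rfl)
      apply Finset.filter_congr
      intro u _
      constructor
      · intro h
        by_contra hx
        exact h (Or.inr (Or.inr (by omega)))
      · intro h
        rintro (hh | hh | hh) <;> omega
    · rw [if_neg hA]
      apply Finset.sum_congr _ (fun _ _ => rfl)
      apply Finset.filter_congr
      intro u _
      constructor
      · intro h
        constructor
        · by_contra hx; exact h (Or.inr (Or.inl (by omega)))
        · by_contra hx; exact h (Or.inr (Or.inr (by omega)))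
      · rintro ⟨h1', h2'⟩
        rintro (hh | hh | hh) <;> omega

lemma eig_tri {n m : ℕ} (hnm : n = 2*m+2) (hm : 2 ≤ m) (g : ℕ → ℝ) (a b c μ : ℝ)
    (hg : ∀ i, g i = if i < 2 then a else if i < 2+m then b else c)
    (h0 : ((n:ℝ)-1+1)*a - (2*a + m*b + m*c) - 0 = μ * a)
    (hA : ((n:ℝ)-1+(m:ℝ)+1)*b - (2*a + m*b + m*c) - m*c = μ * b)
    (hB : ((n:ℝ)-1+(m:ℝ)+1)*c - (2*a + m*b + m*c) - m*b = μ * c) :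
    (distLapMatrix (joinTwoCliques n)).mulVec (fun u => g u.val)
      = μ • (fun u : Fin n => g u.val) := by
  funext v
  rw [mulVec_formula hnm hm, Pi.smul_apply, smul_eq_mul]
  have hS : ∑ u : Fin n, g u.val = 2*a + m*b + m*c := by
    rw [Fin.sum_univ_eq_sum_range g n, Finset.sum_congr rfl (fun i _ => hg i),
      sum_tri n m hnm a b c]
  have hSA : ∑ u ∈ Finset.univ.filter (fun u : Fin n => 2 ≤ u.val ∧ u.val < 2+m), g u.val
      = m*b := by
    rw [sum_filter_val n (fun i => 2 ≤ i ∧ i < 2+m) g, filterA n m (by omega),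
      sum_Ico_const_of 2 (2+m) g b
        (fun i h1 h2 => by rw [hg, if_neg (show ¬ i < 2 by omega), if_pos h2]),
      show 2+m-2 = m by omega]
  have hSB : ∑ u ∈ Finset.univ.filter (fun u : Fin n => 2+m ≤ u.val), g u.val = m*c := by
    rw [sum_filter_val n (fun i => 2+m ≤ i) g, filterB n m (by omega),
      sum_Ico_const_of (2+m) n g c
        (fun i h1 h2 => by rw [hg, if_neg (show ¬ i < 2 by omega), if_neg (show ¬ i < 2+m by omega)]),
      show n-(2+m) = m by omega]
  rw [hS, hSA, hSB]
  split_ifs with h1 h2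
  · rw [hg, if_pos h1]; exact h0
  · rw [hg, if_neg h1, if_pos h2]; exact hA
  · rw [hg, if_neg h1, if_neg h2]; exact hB

lemma eig_pair01 {n m : ℕ} (hnm : n = 2*m+2) (hm : 2 ≤ m) (g : ℕ → ℝ)
    (hg : ∀ i, g i = if i = 0 then 1 else if i = 1 then -1 else 0) :
    (distLapMatrix (joinTwoCliques n)).mulVec (fun u => g u.val)
      = (n:ℝ) • (fun u : Fin n => g u.val) := by
  funext v
  rw [mulVec_formula hnm hm, Pi.smul_apply, smul_eq_mul]
  have hS : ∑ u : Fin n, g u.val = 0 := by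
    rw [Fin.sum_univ_eq_sum_range g n, Finset.sum_congr rfl (fun i _ => hg i)]
    exact sum_pair (range n) 0 1 (by omega)
      (Or.inl ⟨Finset.mem_range.mpr (by omega), Finset.mem_range.mpr (by omega)⟩)
  have hSA : ∑ u ∈ Finset.univ.filter (fun u : Fin n => 2 ≤ u.val ∧ u.val < 2+m), g u.val
      = 0 := by
    rw [sum_filter_val n (fun i => 2 ≤ i ∧ i < 2+m) g, Finset.sum_congr rfl (fun i _ => hg i)]
    refine sum_pair _ 0 1 (by omega) (Or.inr ⟨?_, ?_⟩) <;>
      · simp only [Finset.mem_filter, Finset.mem_range]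
        omega
  have hSB : ∑ u ∈ Finset.univ.filter (fun u : Fin n => 2+m ≤ u.val), g u.val = 0 := by
    rw [sum_filter_val n (fun i => 2+m ≤ i) g, Finset.sum_congr rfl (fun i _ => hg i)]
    refine sum_pair _ 0 1 (by omega) (Or.inr ⟨?_, ?_⟩) <;>
      · simp only [Finset.mem_filter, Finset.mem_range]
        omega
  rw [hS, hSA, hSB]
  have hcr : (if v.val < 2 then (0:ℝ) else if v.val < 2+m then 0 else 0) = 0 := by
    split_ifs <;> rfl
  rw [hcr]
  by_cases h0 : v.val = 0
  · rw [hg, if_pos h0, if_pos (show v.val < 2 by omega)]; ring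
  · by_cases h1 : v.val = 1
    · rw [hg, if_neg h0, if_pos h1, if_pos (show v.val < 2 by omega)]; ring
    · rw [hg, if_neg h0, if_neg h1]; ring

lemma eig_pairC {n m : ℕ} (hnm : n = 2*m+2) (hm : 2 ≤ m) (a b : ℕ)
    (h2a : 2 ≤ a) (h2b : 2 ≤ b) (hab : a ≠ b) (han : a < n) (hbn : b < n)
    (hside : a < 2+m ↔ b < 2+m) (g : ℕ → ℝ)
    (hg : ∀ i, g i = if i = a then 1 else if i = b then -1 else 0) :
    (distLapMatrix (joinTwoCliques n)).mulVec (fun u => g u.val)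
      = ((n:ℝ)+m) • (fun u : Fin n => g u.val) := by
  funext v
  rw [mulVec_formula hnm hm, Pi.smul_apply, smul_eq_mul]
  have hS : ∑ u : Fin n, g u.val = 0 := by
    rw [Fin.sum_univ_eq_sum_range g n, Finset.sum_congr rfl (fun i _ => hg i)]
    exact sum_pair (range n) a b hab
      (Or.inl ⟨Finset.mem_range.mpr han, Finset.mem_range.mpr hbn⟩)
  have hSA : ∑ u ∈ Finset.univ.filter (fun u : Fin n => 2 ≤ u.val ∧ u.val < 2+m), g u.val
      = 0 := by
    rw [sum_filter_val n (fun i => 2 ≤ i ∧ i < 2+m) g, Finset.sum_congr rfl (fun i _ => hg i)]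
    refine sum_pair _ a b hab ?_
    by_cases hc : a < 2+m
    · exact Or.inl ⟨by simp only [Finset.mem_filter, Finset.mem_range]; omega,
        by simp only [Finset.mem_filter, Finset.mem_range]; omega⟩
    · exact Or.inr ⟨by simp only [Finset.mem_filter, Finset.mem_range]; omega,
        by simp only [Finset.mem_filter, Finset.mem_range]; omega⟩
  have hSB : ∑ u ∈ Finset.univ.filter (fun u : Fin n => 2+m ≤ u.val), g u.val = 0 := by
    rw [sum_filter_val n (fun i => 2+m ≤ i) g, Finset.sum_congr rfl (fun i _ => hg i)]
    refine sum_pair _ a b hab ?_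
    by_cases hc : a < 2+m
    · exact Or.inr ⟨by simp only [Finset.mem_filter, Finset.mem_range]; omega,
        by simp only [Finset.mem_filter, Finset.mem_range]; omega⟩
    · exact Or.inl ⟨by simp only [Finset.mem_filter, Finset.mem_range]; omega,
        by simp only [Finset.mem_filter, Finset.mem_range]; omega⟩
  rw [hS, hSA, hSB]
  have hcr : (if v.val < 2 then (0:ℝ) else if v.val < 2+m then 0 else 0) = 0 := by
    split_ifs <;> rfl
  rw [hcr]
  by_cases hva : v.val = a
  · rw [hg, if_pos hva, if_neg (show ¬ v.val < 2 by omega)]; ring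
  · by_cases hvb : v.val = b
    · rw [hg, if_neg hva, if_pos hvb, if_neg (show ¬ v.val < 2 by omega)]; ring
    · rw [hg, if_neg hva, if_neg hvb]; ring

lemma finrank_lb {n d : ℕ} (p : Submodule ℝ (Fin n → ℝ)) (v : Fin d → (Fin n → ℝ))
    (hv : ∀ i, v i ∈ p) (hli : LinearIndependent ℝ v) : d ≤ Module.finrank ℝ p := by
  have h1 := finrank_span_eq_card hli
  rw [Fintype.card_fin] at h1
  have h2 : Submodule.span ℝ (Set.range v) ≤ p :=
    Submodule.span_le.mpr (by rintro _ ⟨i, rfl⟩; exact hv i)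
  rw [← h1]
  exact Submodule.finrank_mono h2

lemma rank_sup {n : ℕ} (p q : Submodule ℝ (Fin n → ℝ)) (h : Disjoint p q) :
    Module.finrank ℝ ((p ⊔ q : Submodule ℝ (Fin n → ℝ)) : Submodule ℝ (Fin n → ℝ))
      = Module.finrank ℝ p + Module.finrank ℝ q := by
  have key := Submodule.finrank_sup_add_finrank_inf_eq p q
  rw [disjoint_iff.mp h] at key
  simpa using key

lemma disj2 {n : ℕ} (f : Module.End ℝ (Fin n → ℝ)) (μ ν₁ ν₂ : ℝ)
    (h1 : ν₁ ≠ μ) (h2 : ν₂ ≠ μ) :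
    Disjoint (f.eigenspace μ) (f.eigenspace ν₁ ⊔ f.eigenspace ν₂) := by
  refine (iSupIndep_def.mp f.eigenspaces_iSupIndep μ).mono_right ?_
  refine sup_le ?_ ?_
  · exact le_iSup₂ (f := fun j (_ : j ≠ μ) => f.eigenspace j) ν₁ h1
  · exact le_iSup₂ (f := fun j (_ : j ≠ μ) => f.eigenspace j) ν₂ h2

lemma disj3 {n : ℕ} (f : Module.End ℝ (Fin n → ℝ)) (μ ν₁ ν₂ ν₃ : ℝ)
    (h1 : ν₁ ≠ μ) (h2 : ν₂ ≠ μ) (h3 : ν₃ ≠ μ) :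
    Disjoint (f.eigenspace μ) (f.eigenspace ν₁ ⊔ f.eigenspace ν₂ ⊔ f.eigenspace ν₃) := by
  refine (iSupIndep_def.mp f.eigenspaces_iSupIndep μ).mono_right ?_
  refine sup_le (sup_le ?_ ?_) ?_ <;>
    exact le_iSup₂ (f := fun j (_ : j ≠ μ) => f.eigenspace j) _ ‹_ ≠ μ›

lemma disj4 {n : ℕ} (f : Module.End ℝ (Fin n → ℝ)) (μ ν₁ ν₂ ν₃ ν₄ : ℝ)
    (h1 : ν₁ ≠ μ) (h2 : ν₂ ≠ μ) (h3 : ν₃ ≠ μ) (h4 : ν₄ ≠ μ) :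
    Disjoint (f.eigenspace μ)
      (f.eigenspace ν₁ ⊔ f.eigenspace ν₂ ⊔ f.eigenspace ν₃ ⊔ f.eigenspace ν₄) := by
  refine (iSupIndep_def.mp f.eigenspaces_iSupIndep μ).mono_right ?_
  refine sup_le (sup_le (sup_le ?_ ?_) ?_) ?_ <;>
    exact le_iSup₂ (f := fun j (_ : j ≠ μ) => f.eigenspace j) _ ‹_ ≠ μ›

def qv (m j : ℕ) : ℕ := if j < m-1 then 3+j else j+4
def basev (m j : ℕ) : ℕ := if j < m-1 then 2 else 2+m

lemma qv_lt {n m : ℕ} (hnm : n = 2*m+2) {j : ℕ} (hj : j < 2*m-2) : qv m j < n := by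
  unfold qv; split_ifs <;> omega

lemma qv_ge3 (m j : ℕ) : 3 ≤ qv m j := by unfold qv; split_ifs <;> omega

lemma qv_ne_base (m i j : ℕ) : qv m i ≠ basev m j := by
  unfold qv basev; split_ifs <;> omega

lemma qv_inj (m : ℕ) {i j : ℕ} (h : qv m i = qv m j) : i = j := by
  unfold qv at h; split_ifs at h <;> omega

lemma basev_ge2 (m j : ℕ) : 2 ≤ basev m j := by unfold basev; split_ifs <;> omega

lemma basev_lt {n m : ℕ} (hnm : n = 2*m+2) (hm : 2 ≤ m) (j : ℕ) : basev m j < n := by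
  unfold basev; split_ifs <;> omega

lemma qb_side (m : ℕ) (j : ℕ) : (basev m j < 2+m ↔ qv m j < 2+m) := by
  unfold qv basev; split_ifs <;> omega

noncomputable def gpair (a b : ℕ) : ℕ → ℝ := fun i => if i = a then 1 else if i = b then -1 else 0

lemma w_li {n m : ℕ} (hnm : n = 2*m+2) (hm : 2 ≤ m) :
    LinearIndependent ℝ (fun (j : Fin (2*m-2)) => fun (u : Fin n) =>
      gpair (basev m j.val) (qv m j.val) u.val) := by
  rw [linearIndependent_iff']
  intro s c hsum i hi
  have hqlt : qv m i.val < n := qv_lt hnm i.isLt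
  have hev := congrFun hsum (⟨qv m i.val, hqlt⟩ : Fin n)
  simp only [Finset.sum_apply, Pi.smul_apply, smul_eq_mul, Pi.zero_apply] at hev
  have key : ∀ j ∈ s, c j * gpair (basev m j.val) (qv m j.val) (⟨qv m i.val, hqlt⟩ : Fin n).val
      = if j = i then -(c j) else 0 := by
    intro j _
    show c j * gpair (basev m j.val) (qv m j.val) (qv m i.val) = _
    unfold gpair
    by_cases hji : j = i
    · subst hji
      rw [if_pos rfl, if_neg (qv_ne_base m _ _), if_pos rfl]
      ring
    · rw [if_neg hji, if_neg (qv_ne_base m i.val j.val),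
        if_neg (fun h => hji (Fin.ext (qv_inj m h)).symm)]
      ring
  rw [Finset.sum_congr rfl key, Finset.sum_ite_eq' s i (fun j => -(c j)), if_pos hi] at hev
  linarith [hev]

noncomputable def gtri (a b c : ℝ) (m : ℕ) : ℕ → ℝ :=
  fun i => if i < 2 then a else if i < 2+m then b else c

/-- The distance Laplacian spectrum of `K_2 ∨ (K_{(n-2)/2} ∪ K_{(n-2)/2})`, for even
`n ≥ 6`, is `2n-2` with multiplicity `1`, `(3n-2)/2` with multiplicity `n-4`, `n` with
multiplicity `2`, and `0` with multiplicity `1`. -/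
theorem stmt_19 (n : ℕ) (hn : 6 ≤ n) (hev : 2 ∣ n)
    (M : Matrix (Fin n) (Fin n) ℝ) (hM : M = distLapMatrix (joinTwoCliques n)) :
    eigMult M (2 * (n : ℝ) - 2) = 1 ∧
    eigMult M ((3 * (n : ℝ) - 2) / 2) = n - 4 ∧
    eigMult M (n : ℝ) = 2 ∧
    eigMult M 0 = 1 ∧
    (∀ μ : ℝ, IsEigenvalue M μ →
      μ = 0 ∨ μ = (n : ℝ) ∨ μ = (3 * (n : ℝ) - 2) / 2 ∨ μ = 2 * (n : ℝ) - 2) := by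
  obtain ⟨k, hk⟩ := hev
  set m : ℕ := (n-2)/2 with hmdef
  have hnm : n = 2*m+2 := by omega
  have hm : 2 ≤ m := by omega
  have hnR : (n:ℝ) = 2*(m:ℝ)+2 := by rw [hnm]; push_cast; ring
  have hmR : (2:ℝ) ≤ (m:ℝ) := by exact_mod_cast hm
  set f : Module.End ℝ (Fin n → ℝ) := Matrix.toLin' M with hf
  have hmem : ∀ (x : Fin n → ℝ) (μ : ℝ), M.mulVec x = μ • x → x ∈ f.eigenspace μ := by
    intro x μ h
    rw [Module.End.mem_eigenspace_iff, hf, Matrix.toLin'_apply, h]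
  -- eigenvalues
  have hμ2 : (3*(n:ℝ)-2)/2 = (n:ℝ)+(m:ℝ) := by rw [hnR]; ring
  -- eigenvectors
  have m1 : (fun u : Fin n => gtri 1 1 1 m u.val) ∈ f.eigenspace 0 := by
    refine hmem _ _ ?_
    rw [hM]
    exact eig_tri hnm hm (gtri 1 1 1 m) 1 1 1 0 (fun i => rfl)
      (by rw [hnR]; ring) (by rw [hnR]; ring) (by rw [hnR]; ring)
  have m2 : (fun u : Fin n => gpair 0 1 u.val) ∈ f.eigenspace (n:ℝ) := by
    refine hmem _ _ ?_
    rw [hM]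
    exact eig_pair01 hnm hm (gpair 0 1) (fun i => rfl)
  have m3 : (fun u : Fin n => gtri (2*(m:ℝ)) (-2) (-2) m u.val) ∈ f.eigenspace (n:ℝ) := by
    refine hmem _ _ ?_
    rw [hM]
    exact eig_tri hnm hm (gtri (2*(m:ℝ)) (-2) (-2) m) (2*(m:ℝ)) (-2) (-2) (n:ℝ) (fun i => rfl)
      (by ring) (by ring) (by ring)
  have m4 : (fun u : Fin n => gtri 0 1 (-1) m u.val) ∈ f.eigenspace (2*(n:ℝ)-2) := by
    refine hmem _ _ ?_
    rw [hM]
    exact eig_tri hnm hm (gtri 0 1 (-1) m) 0 1 (-1) (2*(n:ℝ)-2) (fun i => rfl)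
      (by ring) (by rw [hnR]; ring) (by rw [hnR]; ring)
  have mw : ∀ j : Fin (2*m-2),
      (fun u : Fin n => gpair (basev m j.val) (qv m j.val) u.val)
        ∈ f.eigenspace ((3*(n:ℝ)-2)/2) := by
    intro j
    rw [hμ2]
    refine hmem _ _ ?_
    rw [hM]
    exact eig_pairC hnm hm (basev m j.val) (qv m j.val) (basev_ge2 m j.val)
      (by have := qv_ge3 m j.val; omega) (Ne.symm (qv_ne_base m j.val j.val))
      (basev_lt hnm hm j.val) (qv_lt hnm j.isLt) (qb_side m j.val)
      (gpair (basev m j.val) (qv m j.val)) (fun i => rfl)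
  -- lower bounds
  have l0 : 1 ≤ Module.finrank ℝ (f.eigenspace 0) := by
    refine finrank_lb _ (fun _ : Fin 1 => (fun u : Fin n => gtri 1 1 1 m u.val))
      (fun _ => m1) (linearIndependent_unique_iff.mpr ?_)
    intro h
    have h0 := congrFun h ⟨0, by omega⟩
    norm_num [gtri] at h0
  have l3 : 1 ≤ Module.finrank ℝ (f.eigenspace (2*(n:ℝ)-2)) := by
    refine finrank_lb _ (fun _ : Fin 1 => (fun u : Fin n => gtri 0 1 (-1) m u.val))
      (fun _ => m4) (linearIndependent_unique_iff.mpr ?_)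
    intro h
    have h0 := congrFun h ⟨2, by omega⟩
    norm_num [gtri] at h0
    rw [if_pos (show 0 < m by omega)] at h0
    exact one_ne_zero h0
  have l1 : 2 ≤ Module.finrank ℝ (f.eigenspace (n:ℝ)) := by
    refine finrank_lb _
      ![(fun u : Fin n => gpair 0 1 u.val), (fun u : Fin n => gtri (2*(m:ℝ)) (-2) (-2) m u.val)]
      ?_ ?_
    · intro i
      fin_cases i
      · exact m2
      · exact m3
    · rw [linearIndependent_fin2]
      simp only [Matrix.cons_val_one, Matrix.head_cons, Matrix.cons_val_zero]
      constructor
      · intro h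
        have h0 := congrFun h ⟨0, by omega⟩
        norm_num [gtri] at h0
        linarith
      · intro a h
        have h0 := congrFun h ⟨0, by omega⟩
        have h1 := congrFun h ⟨1, by omega⟩
        norm_num [gtri, gpair, Pi.smul_apply, smul_eq_mul] at h0 h1
        nlinarith
  have l2 : 2*m-2 ≤ Module.finrank ℝ (f.eigenspace ((3*(n:ℝ)-2)/2)) := by
    exact finrank_lb _ _ mw (w_li hnm hm)
  -- distinctness
  have ne10 : (n:ℝ) ≠ 0 := by rw [hnR]; nlinarith
  have ne20 : (3*(n:ℝ)-2)/2 ≠ 0 := by rw [hμ2, hnR]; nlinarith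
  have ne21 : (3*(n:ℝ)-2)/2 ≠ (n:ℝ) := by rw [hμ2]; intro h; nlinarith
  have ne30 : 2*(n:ℝ)-2 ≠ 0 := by rw [hnR]; nlinarith
  have ne31 : 2*(n:ℝ)-2 ≠ (n:ℝ) := by intro h; rw [hnR] at h; nlinarith
  have ne32 : 2*(n:ℝ)-2 ≠ (3*(n:ℝ)-2)/2 := by rw [hμ2]; intro h; rw [hnR] at h; nlinarith
  -- rank of sup
  have hpd := (Module.End.eigenspaces_iSupIndep f).pairwiseDisjoint
  have r01 : Module.finrank ℝ ((f.eigenspace 0 ⊔ f.eigenspace (n:ℝ) : Submodule ℝ (Fin n → ℝ)))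
      = Module.finrank ℝ (f.eigenspace 0) + Module.finrank ℝ (f.eigenspace (n:ℝ)) :=
    rank_sup _ _ (hpd (Ne.symm ne10))
  have r012 : Module.finrank ℝ
      ((f.eigenspace 0 ⊔ f.eigenspace (n:ℝ) ⊔ f.eigenspace ((3*(n:ℝ)-2)/2) : Submodule ℝ (Fin n → ℝ)))
      = Module.finrank ℝ (f.eigenspace 0) + Module.finrank ℝ (f.eigenspace (n:ℝ))
        + Module.finrank ℝ (f.eigenspace ((3*(n:ℝ)-2)/2)) := by
    rw [rank_sup _ _ ((disj2 f ((3*(n:ℝ)-2)/2) 0 (n:ℝ) (Ne.symm ne20) (Ne.symm ne21)).symm), r01]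
  have r0123 : Module.finrank ℝ
      ((f.eigenspace 0 ⊔ f.eigenspace (n:ℝ) ⊔ f.eigenspace ((3*(n:ℝ)-2)/2)
        ⊔ f.eigenspace (2*(n:ℝ)-2) : Submodule ℝ (Fin n → ℝ)))
      = Module.finrank ℝ (f.eigenspace 0) + Module.finrank ℝ (f.eigenspace (n:ℝ))
        + Module.finrank ℝ (f.eigenspace ((3*(n:ℝ)-2)/2))
        + Module.finrank ℝ (f.eigenspace (2*(n:ℝ)-2)) := by
    rw [rank_sup _ _ ((disj3 f (2*(n:ℝ)-2) 0 (n:ℝ) ((3*(n:ℝ)-2)/2)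
      (Ne.symm ne30) (Ne.symm ne31) (Ne.symm ne32)).symm), r012]
  have htot : Module.finrank ℝ (Fin n → ℝ) = n := by simp [Module.finrank_pi]
  have hub := Submodule.finrank_le
    ((f.eigenspace 0 ⊔ f.eigenspace (n:ℝ) ⊔ f.eigenspace ((3*(n:ℝ)-2)/2)
        ⊔ f.eigenspace (2*(n:ℝ)-2) : Submodule ℝ (Fin n → ℝ)))
  rw [htot, r0123] at hub
  have heq : Module.finrank ℝ (f.eigenspace 0) = 1
      ∧ Module.finrank ℝ (f.eigenspace (n:ℝ)) = 2
      ∧ Module.finrank ℝ (f.eigenspace ((3*(n:ℝ)-2)/2)) = 2*m-2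
      ∧ Module.finrank ℝ (f.eigenspace (2*(n:ℝ)-2)) = 1 := by omega
  obtain ⟨e0, e1, e2, e3⟩ := heq
  refine ⟨e3, ?_, e1, e0, ?_⟩
  · show Module.finrank ℝ (f.eigenspace ((3*(n:ℝ)-2)/2)) = n - 4
    omega
  · intro μ hEig
    by_contra hcon
    push_neg at hcon
    obtain ⟨h1, h2, h3, h4⟩ := hcon
    have hd := disj4 f μ 0 (n:ℝ) ((3*(n:ℝ)-2)/2) (2*(n:ℝ)-2)
      (Ne.symm h1) (Ne.symm h2) (Ne.symm h3) (Ne.symm h4)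
    have hr := rank_sup _ _ hd.symm
    have hub2 := Submodule.finrank_le
      ((f.eigenspace 0 ⊔ f.eigenspace (n:ℝ) ⊔ f.eigenspace ((3*(n:ℝ)-2)/2)
        ⊔ f.eigenspace (2*(n:ℝ)-2) ⊔ f.eigenspace μ : Submodule ℝ (Fin n → ℝ)))
    rw [htot, hr, r0123] at hub2
    have hzero : Module.finrank ℝ (f.eigenspace μ) = 0 := by omega
    have hbot : f.eigenspace μ = ⊥ := Submodule.finrank_eq_zero.mp hzero
    exact (Module.End.hasEigenvalue_iff.mp hEig) hbot
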